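/- Let W₁ ⪰ W̃₁ ⪰ 0 on ℂ^{d₁}, and let 0 ≤ ζ < 1 and ξ ≥ 0 satisfy (1−ζ)W₁ ⪰ (1+ξ)W̃₁. Then for any W₂ ⪰ W̃₂ ⪰ 0 on ℂ^{d₂}, the operator 𝒲_f = (1−ζ)W₁⊗W₂ − (1+ξ)W̃₁⊗W̃₂ satisfies Tr(𝒲_f σ) ≥ 0 for all separable states σ, and 𝒲_f ≤ 𝒲_c := W₁⊗W₂ − W̃₁⊗W̃₂ in the Loewner order (so 𝒲_f detects every state 𝒲_c detects). -/

import Mathlib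

open ComplexOrder Matrix Kronecker

lemma aux_psd_add {n : Type*} [Fintype n] {A B : Matrix n n ℂ}
    (hA : A.PosSemidef) (hB : B.PosSemidef) : (A + B).PosSemidef := by
  refine posSemidef_iff_dotProduct_mulVec.mpr ⟨hA.1.add hB.1, fun x => ?_⟩
  rw [add_mulVec, dotProduct_add]
  exact add_nonneg ((posSemidef_iff_dotProduct_mulVec.mp hA).2 x) ((posSemidef_iff_dotProduct_mulVec.mp hB).2 x)

lemma aux_psd_smul {n : Type*} [Fintype n] {A : Matrix n n ℂ} (hA : A.PosSemidef)
    {c : ℝ} (hc : 0 ≤ c) : ((c : ℂ) • A).PosSemidef := by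
  refine posSemidef_iff_dotProduct_mulVec.mpr ⟨?_, fun x => ?_⟩
  · unfold Matrix.IsHermitian
    rw [conjTranspose_smul, hA.1.eq]
    congr 1
    exact Complex.conj_ofReal c
  · rw [smul_mulVec, dotProduct_smul, smul_eq_mul]
    exact mul_nonneg (by exact_mod_cast hc) ((posSemidef_iff_dotProduct_mulVec.mp hA).2 x)

lemma aux_kron_conjTranspose {m n m' n' : Type*}
    (A : Matrix m n ℂ) (B : Matrix m' n' ℂ) : (A ⊗ₖ B)ᴴ = Aᴴ ⊗ₖ Bᴴ := by
  ext ⟨i, j⟩ ⟨k, l⟩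
  simp [conjTranspose_apply, mul_comm]

lemma aux_psd_kron {m n : Type*} [Fintype m] [Fintype n] [DecidableEq m] [DecidableEq n]
    {A : Matrix m m ℂ} {B : Matrix n n ℂ}
    (hA : A.PosSemidef) (hB : B.PosSemidef) : (A ⊗ₖ B).PosSemidef := by
  obtain ⟨C, rfl⟩ : ∃ C : Matrix m m ℂ, _ = Cᴴ * C := by
    open scoped Matrix.Norms.L2Operator MatrixOrder in
    exact CStarAlgebra.nonneg_iff_eq_star_mul_self.mp hA.nonneg
  obtain ⟨D, rfl⟩ : ∃ D : Matrix n n ℂ, _ = Dᴴ * D := by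
    open scoped Matrix.Norms.L2Operator MatrixOrder in
    exact CStarAlgebra.nonneg_iff_eq_star_mul_self.mp hB.nonneg
  rw [mul_kronecker_mul, ← aux_kron_conjTranspose]
  exact posSemidef_conjTranspose_mul_self _

lemma aux_psd_trace_nonneg {n : Type*} [Fintype n] [DecidableEq n] {A : Matrix n n ℂ}
    (hA : A.PosSemidef) : 0 ≤ A.trace := by
  rw [Matrix.trace]
  refine Finset.sum_nonneg fun i _ => ?_
  have := (posSemidef_iff_dotProduct_mulVec.mp hA).2 (Pi.single i 1)
  simpa [Matrix.mulVec_single, dotProduct, Pi.single_apply, apply_ite] using this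

lemma aux_trace_mul_nonneg {n : Type*} [Fintype n] [DecidableEq n] {A B : Matrix n n ℂ}
    (hA : A.PosSemidef) (hB : B.PosSemidef) : 0 ≤ (A * B).trace := by
  obtain ⟨C, rfl⟩ : ∃ C : Matrix n n ℂ, _ = Cᴴ * C := by
    open scoped Matrix.Norms.L2Operator MatrixOrder in
    exact CStarAlgebra.nonneg_iff_eq_star_mul_self.mp hA.nonneg
  rw [← Matrix.trace_mul_cycle]
  exact aux_psd_trace_nonneg (hB.mul_mul_conjTranspose_same C)


/-- A bipartite density matrix is separable if it is a finite convex combination of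
product density matrices. -/
def SepState {d₁ d₂ : ℕ} (σ : Matrix (Fin d₁ × Fin d₂) (Fin d₁ × Fin d₂) ℂ) : Prop :=
  ∃ (m : ℕ) (lam : Fin m → ℝ) (σ₁ : Fin m → Matrix (Fin d₁) (Fin d₁) ℂ)
    (σ₂ : Fin m → Matrix (Fin d₂) (Fin d₂) ℂ),
    (∀ q, 0 ≤ lam q) ∧ (∑ q, lam q = 1) ∧
    (∀ q, (σ₁ q).PosSemidef ∧ (σ₁ q).trace = 1) ∧
    (∀ q, (σ₂ q).PosSemidef ∧ (σ₂ q).trace = 1) ∧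
    σ = ∑ q, (lam q : ℂ) • (σ₁ q ⊗ₖ σ₂ q)

/-- With `W₁ ⪰ W̃₁ ⪰ 0`, `0 ≤ ζ < 1`, `ξ ≥ 0` and `(1−ζ)W₁ ⪰ (1+ξ)W̃₁`, the improved
witness `𝒲_f = (1−ζ)W₁⊗W₂ − (1+ξ)W̃₁⊗W̃₂` is nonnegative on all separable states and
satisfies `𝒲_f ≤ 𝒲_c` in the Loewner order, where `𝒲_c = W₁⊗W₂ − W̃₁⊗W̃₂`. -/
theorem stmt_18 {d₁ d₂ : ℕ}
    (W₁ Wt₁ : Matrix (Fin d₁) (Fin d₁) ℂ) (W₂ Wt₂ : Matrix (Fin d₂) (Fin d₂) ℂ)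
    (h₁ : (W₁ - Wt₁).PosSemidef) (h₁' : Wt₁.PosSemidef)
    (h₂ : (W₂ - Wt₂).PosSemidef) (h₂' : Wt₂.PosSemidef)
    (ζ ξ : ℝ) (hζ0 : 0 ≤ ζ) (hζ1 : ζ < 1) (hξ : 0 ≤ ξ)
    (himp : (((1 - ζ : ℝ) : ℂ) • W₁ - ((1 + ξ : ℝ) : ℂ) • Wt₁).PosSemidef) :
    (∀ σ : Matrix (Fin d₁ × Fin d₂) (Fin d₁ × Fin d₂) ℂ, SepState σ →
      0 ≤ ((((1 - ζ : ℝ) : ℂ) • (W₁ ⊗ₖ W₂) - ((1 + ξ : ℝ) : ℂ) • (Wt₁ ⊗ₖ Wt₂)) * σ).trace) ∧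
    ((W₁ ⊗ₖ W₂ - Wt₁ ⊗ₖ Wt₂)
      - (((1 - ζ : ℝ) : ℂ) • (W₁ ⊗ₖ W₂) - ((1 + ξ : ℝ) : ℂ) • (Wt₁ ⊗ₖ Wt₂))).PosSemidef := by
  have hW₁ : W₁.PosSemidef := by simpa using aux_psd_add h₁ h₁'
  have hW₂ : W₂.PosSemidef := by simpa using aux_psd_add h₂ h₂'
  constructor
  · rintro σ ⟨m, lam, σ₁, σ₂, hlam, -, hs₁, hs₂, rfl⟩
    rw [Finset.mul_sum, trace_sum]
    refine Finset.sum_nonneg fun q _ => ?_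
    rw [mul_smul_comm, trace_smul, smul_eq_mul]
    refine mul_nonneg (by exact_mod_cast hlam q) ?_
    rw [sub_mul, smul_mul_assoc, smul_mul_assoc, ← mul_kronecker_mul, ← mul_kronecker_mul,
      trace_sub, trace_smul, trace_smul, trace_kronecker, trace_kronecker,
      smul_eq_mul, smul_eq_mul, sub_nonneg]
    set a := (W₁ * σ₁ q).trace
    set a' := (Wt₁ * σ₁ q).trace
    set b := (W₂ * σ₂ q).trace
    set b' := (Wt₂ * σ₂ q).trace
    have ha' : 0 ≤ a' := aux_trace_mul_nonneg h₁' (hs₁ q).1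
    have hb' : 0 ≤ b' := aux_trace_mul_nonneg h₂' (hs₂ q).1
    have hb : b' ≤ b := by
      have := aux_trace_mul_nonneg h₂ (hs₂ q).1
      rw [sub_mul, trace_sub, sub_nonneg] at this
      exact this
    have hkey : ((1 + ξ : ℝ) : ℂ) * a' ≤ ((1 - ζ : ℝ) : ℂ) * a := by
      have := aux_trace_mul_nonneg himp (hs₁ q).1
      rw [sub_mul, smul_mul_assoc, smul_mul_assoc, trace_sub, trace_smul, trace_smul,
        smul_eq_mul, smul_eq_mul, sub_nonneg] at this
      exact this
    have h0 : (0 : ℂ) ≤ ((1 + ξ : ℝ) : ℂ) * a' :=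
      mul_nonneg (by exact_mod_cast (by linarith : (0:ℝ) ≤ 1 + ξ)) ha'
    calc ((1 + ξ : ℝ) : ℂ) * (a' * b') = (((1 + ξ : ℝ) : ℂ) * a') * b' := by ring
      _ ≤ (((1 - ζ : ℝ) : ℂ) * a) * b := mul_le_mul hkey hb hb' (le_trans h0 hkey)
      _ = ((1 - ζ : ℝ) : ℂ) * (a * b) := by ring
  · have heq : (W₁ ⊗ₖ W₂ - Wt₁ ⊗ₖ Wt₂)
        - (((1 - ζ : ℝ) : ℂ) • (W₁ ⊗ₖ W₂) - ((1 + ξ : ℝ) : ℂ) • (Wt₁ ⊗ₖ Wt₂))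
        = (ζ : ℂ) • (W₁ ⊗ₖ W₂) + (ξ : ℂ) • (Wt₁ ⊗ₖ Wt₂) := by
      push_cast
      module
    rw [heq]
    exact aux_psd_add (aux_psd_smul (aux_psd_kron hW₁ hW₂) hζ0)
      (aux_psd_smul (aux_psd_kron h₁' h₂') hξ)
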